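/- Define $g(\theta) = q\pi + (-1)^q \arccos(\sin\theta) + \cos\theta \sin\theta$ for $\theta \in [-\pi, \pi)$, where $q = 1$ if $\theta \in (-\pi/2, \pi/2)$ and $q = 0$ otherwise. Then $\frac{1}{2\pi}\int_{-\pi}^{\pi} g(\theta)\, d\theta = \frac{\pi}{2}$. -/

import Mathlib

open Real intervalIntegral MeasureTheory Set

private lemma aux_arccos_left {θ : ℝ} (h1 : -π ≤ θ) (h2 : θ ≤ -(π/2)) :
    Real.arccos (Real.sin θ) = 3*π/2 + θ := by
  have hsin : Real.sin θ = Real.sin (-π - θ) := by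
    rw [show -π - θ = -(π + θ) by ring, Real.sin_neg, Real.sin_add]; simp
  rw [hsin, Real.arccos_eq_pi_div_two_sub_arcsin,
    Real.arcsin_sin (by linarith) (by linarith)]
  ring

private lemma aux_arccos_mid {θ : ℝ} (h1 : -(π/2) ≤ θ) (h2 : θ ≤ π/2) :
    Real.arccos (Real.sin θ) = π/2 - θ := by
  rw [Real.arccos_eq_pi_div_two_sub_arcsin, Real.arcsin_sin h1 h2]

private lemma aux_arccos_right {θ : ℝ} (h1 : π/2 ≤ θ) (h2 : θ ≤ π) :
    Real.arccos (Real.sin θ) = θ - π/2 := by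
  have hsin : Real.sin θ = Real.sin (π - θ) := (Real.sin_pi_sub θ).symm
  rw [hsin, Real.arccos_eq_pi_div_two_sub_arcsin,
    Real.arcsin_sin (by linarith [Real.pi_pos]) (by linarith)]
  ring

private lemma aux_anti (c : ℝ) (a b : ℝ) :
    ∫ θ in a..b, (c + θ + Real.cos θ * Real.sin θ)
      = (c*b + b^2/2 + Real.sin b^2/2) - (c*a + a^2/2 + Real.sin a^2/2) := by
  apply intervalIntegral.integral_eq_sub_of_hasDerivAt
  · intro x _
    have h1 : HasDerivAt (fun θ : ℝ => c * θ) c x := by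
      simpa using (hasDerivAt_id x).const_mul c
    have h2 : HasDerivAt (fun θ : ℝ => θ^2/2) x x := by
      simpa using (hasDerivAt_pow 2 x).div_const 2
    have h3 : HasDerivAt (fun θ : ℝ => Real.sin θ^2/2)
        (Real.cos x * Real.sin x) x := by
      have := ((Real.hasDerivAt_sin x).pow 2).div_const 2
      exact this.congr_deriv (by norm_num; ring)
    exact (h1.add h2).add h3
  · exact Continuous.intervalIntegrable (by continuity) _ _

private lemma aux_int (c : ℝ) (a b : ℝ) :
    IntervalIntegrable (fun θ : ℝ => c + θ + Real.cos θ * Real.sin θ) volume a b :=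
  Continuous.intervalIntegrable (by continuity) _ _

/-- The angular average in the proof of Proposition 4: with
`g(θ) = qπ + (-1)^q arccos(sin θ) + cos θ sin θ`, `q = 1` on `(-π/2, π/2)` and `q = 0`
otherwise, one has `(1/2π) ∫_{-π}^{π} g(θ) dθ = π/2`. -/
theorem angular_average_pi_div_two :
    (1/(2*π)) * ∫ θ in (-π)..π,
        (if -(π/2) < θ ∧ θ < π/2
          then π - Real.arccos (Real.sin θ) + Real.cos θ * Real.sin θ
          else Real.arccos (Real.sin θ) + Real.cos θ * Real.sin θ)
      = π / 2 := by
  have hπ := Real.pi_pos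
  set f : ℝ → ℝ := fun θ => if -(π/2) < θ ∧ θ < π/2
      then π - Real.arccos (Real.sin θ) + Real.cos θ * Real.sin θ
      else Real.arccos (Real.sin θ) + Real.cos θ * Real.sin θ with hfdef
  -- pointwise descriptions on the three pieces
  have key1 : ∀ θ ∈ Icc (-π) (-(π/2)), f θ = 3*π/2 + θ + Real.cos θ * Real.sin θ := by
    intro θ hθ
    have : ¬ (-(π/2) < θ ∧ θ < π/2) := by
      rintro ⟨h, -⟩; linarith [hθ.2]
    simp only [hfdef, if_neg this]
    rw [aux_arccos_left hθ.1 hθ.2]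
  have key2 : ∀ θ ∈ Ioo (-(π/2)) (π/2), f θ = π/2 + θ + Real.cos θ * Real.sin θ := by
    intro θ hθ
    simp only [hfdef, if_pos (And.intro hθ.1 hθ.2)]
    rw [aux_arccos_mid hθ.1.le hθ.2.le]
    ring
  have key3 : ∀ θ ∈ Icc (π/2) π, f θ = -(π/2) + θ + Real.cos θ * Real.sin θ := by
    intro θ hθ
    have : ¬ (-(π/2) < θ ∧ θ < π/2) := by
      rintro ⟨-, h⟩; linarith [hθ.1]
    simp only [hfdef, if_neg this]
    rw [aux_arccos_right hθ.1 hθ.2]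
    ring
  -- ae facts
  have hne : ∀ᵐ x : ℝ, x ≠ (π/2 : ℝ) := by
    rw [MeasureTheory.ae_iff]
    simpa [not_not, Set.setOf_eq_eq_singleton] using Real.volume_singleton (a := π/2)
  -- integrability of f on the three pieces
  have hi1 : IntervalIntegrable f volume (-π) (-(π/2)) := by
    apply (aux_int (3*π/2) _ _).congr_ae
    filter_upwards [ae_restrict_mem measurableSet_uIoc] with x hx
    have hx' : x ∈ Icc (-π) (-(π/2)) := by
      rw [Set.uIoc_of_le (by linarith)] at hx
      exact Ioc_subset_Icc_self hx
    exact (key1 x hx').symm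
  have hi2 : IntervalIntegrable f volume (-(π/2)) (π/2) := by
    apply (aux_int (π/2) _ _).congr_ae
    filter_upwards [ae_restrict_mem measurableSet_uIoc, ae_restrict_of_ae hne]
      with x hx hxne
    have hx' : x ∈ Ioo (-(π/2)) (π/2) := by
      rw [Set.uIoc_of_le (by linarith)] at hx
      exact ⟨hx.1, lt_of_le_of_ne hx.2 hxne⟩
    exact (key2 x hx').symm
  have hi3 : IntervalIntegrable f volume (π/2) π := by
    apply (aux_int (-(π/2)) _ _).congr_ae
    filter_upwards [ae_restrict_mem measurableSet_uIoc] with x hx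
    have hx' : x ∈ Icc (π/2) π := by
      rw [Set.uIoc_of_le (by linarith)] at hx
      exact Ioc_subset_Icc_self hx
    exact (key3 x hx').symm
  -- split the integral
  have hsplit : ∫ θ in (-π)..π, f θ
      = (∫ θ in (-π)..(-(π/2)), f θ) + (∫ θ in (-(π/2))..(π/2), f θ)
        + (∫ θ in (π/2)..π, f θ) := by
    rw [intervalIntegral.integral_add_adjacent_intervals hi1 hi2,
      intervalIntegral.integral_add_adjacent_intervals (hi1.trans hi2) hi3]
  -- compute each piece
  have e1 : ∫ θ in (-π)..(-(π/2)), f θ = 3*π^2/8 + 1/2 := by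
    rw [intervalIntegral.integral_congr (g := fun θ =>
      3*π/2 + θ + Real.cos θ * Real.sin θ)
      (fun x hx => key1 x (by rwa [Set.uIcc_of_le (by linarith)] at hx))]
    rw [aux_anti (3*π/2) (-π) (-(π/2))]
    rw [show Real.sin (-(π/2)) = -1 by simp, show Real.sin (-π) = 0 by simp]
    ring
  have e2 : ∫ θ in (-(π/2))..(π/2), f θ = π^2/2 := by
    rw [intervalIntegral.integral_congr_ae (g := fun θ =>
      π/2 + θ + Real.cos θ * Real.sin θ) ?_]
    · rw [aux_anti (π/2) (-(π/2)) (π/2)]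
      rw [show Real.sin (-(π/2)) = -1 by simp, Real.sin_pi_div_two]
      ring
    · filter_upwards [hne] with x hxne hx
      rw [Set.uIoc_of_le (by linarith)] at hx
      exact key2 x ⟨hx.1, lt_of_le_of_ne hx.2 hxne⟩
  have e3 : ∫ θ in (π/2)..π, f θ = π^2/8 - 1/2 := by
    rw [intervalIntegral.integral_congr (g := fun θ =>
      -(π/2) + θ + Real.cos θ * Real.sin θ)
      (fun x hx => key3 x (by rwa [Set.uIcc_of_le (by linarith)] at hx))]
    rw [aux_anti (-(π/2)) (π/2) π]
    rw [Real.sin_pi, Real.sin_pi_div_two]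
    ring
  rw [hsplit, e1, e2, e3]
  field_simp
  ring
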